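/- Let A, B, C, D be complex matrices of sizes n×n, n×m, m×n and m×m respectively, such that the (n+m)×(n+m) block systems matrix [[A, B], [C, D]] is unitary. Then for every z ∈ ℂ with |z| < 1, the matrix I − z·A is invertible and the m×m matrix Θ(z) = D + z·C (I − z·A)⁻¹ B is a contraction, i.e. I − Θ(z)ᴴ Θ(z) is positive semidefinite. -/

import Mathlib

open Matrix ComplexOrder

private lemma quad_form_eq {N : Type*} [Fintype N] [DecidableEq N] (U : Matrix N N ℂ)
    (hU : Uᴴ * U = 1) (w : N → ℂ) :
    star (U *ᵥ w) ⬝ᵥ (U *ᵥ w) = star w ⬝ᵥ w := by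
  rw [star_mulVec, dotProduct_mulVec, vecMul_vecMul, hU, vecMul_one]

/-- If the systems matrix `[[A, B], [C, D]]` is unitary, then for every `z` in the
open unit disc the matrix `I - z•A` is invertible and `Θ(z) = D + z C (I - z A)⁻¹ B`
is a contraction: `I - Θ(z)ᴴ Θ(z)` is positive semidefinite. -/
theorem stmt_5 {n m : ℕ}
    (A : Matrix (Fin n) (Fin n) ℂ) (B : Matrix (Fin n) (Fin m) ℂ)
    (C : Matrix (Fin m) (Fin n) ℂ) (D : Matrix (Fin m) (Fin m) ℂ)
    (h_unitary : fromBlocks A B C D ∈ Matrix.unitaryGroup (Fin n ⊕ Fin m) ℂ)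
    (z : ℂ) (hz : ‖z‖ < 1) :
    IsUnit (1 - z • A) ∧
      (1 - (D + z • (C * (1 - z • A)⁻¹ * B))ᴴ *
        (D + z • (C * (1 - z • A)⁻¹ * B))).PosSemidef := by
  have hUU : (fromBlocks A B C D)ᴴ * fromBlocks A B C D = 1 := by
    have := mem_unitaryGroup_iff'.mp h_unitary
    rwa [star_eq_conjTranspose] at this
  -- quadratic form identity for Sum.elim vectors
  have hq : ∀ (u : Fin n → ℂ) (x : Fin m → ℂ),
      star (A *ᵥ u + B *ᵥ x) ⬝ᵥ (A *ᵥ u + B *ᵥ x) +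
        star (C *ᵥ u + D *ᵥ x) ⬝ᵥ (C *ᵥ u + D *ᵥ x) =
      star u ⬝ᵥ u + star x ⬝ᵥ x := by
    intro u x
    have hstar : ∀ (a : Fin n → ℂ) (b : Fin m → ℂ),
        star (Sum.elim a b) = Sum.elim (star a) (star b) := by
      intro a b; funext i; cases i <;> rfl
    have h := quad_form_eq _ hUU (Sum.elim u x)
    rw [fromBlocks_mulVec] at h
    simp only [Sum.elim_comp_inl, Sum.elim_comp_inr] at h
    rwa [hstar, hstar, sumElim_dotProduct_sumElim, sumElim_dotProduct_sumElim] at h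
  -- contraction bound for A
  have hA : ∀ u : Fin n → ℂ, star (A *ᵥ u) ⬝ᵥ (A *ᵥ u) ≤ star u ⬝ᵥ u := by
    intro u
    have h := hq u 0
    simp only [mulVec_zero, add_zero, dotProduct_zero] at h
    calc star (A *ᵥ u) ⬝ᵥ (A *ᵥ u)
        ≤ star (A *ᵥ u) ⬝ᵥ (A *ᵥ u) + star (C *ᵥ u) ⬝ᵥ (C *ᵥ u) :=
          le_add_of_nonneg_right (dotProduct_star_self_nonneg _)
      _ = star u ⬝ᵥ u := h
  have hz2 : ‖z‖ ^ 2 < 1 := by nlinarith [norm_nonneg z]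
  -- invertibility of 1 - z • A
  have hunit : IsUnit (1 - z • A) := by
    rw [← mulVec_injective_iff_isUnit]
    have hker : ∀ v : Fin n → ℂ, (1 - z • A) *ᵥ v = 0 → v = 0 := by
      intro v hv
      by_contra hne
      have hv' : v = z • (A *ᵥ v) := by
        rw [sub_mulVec, one_mulVec, smul_mulVec, sub_eq_zero] at hv
        exact hv
      have ht : (0 : ℂ) < star v ⬝ᵥ v := dotProduct_star_self_pos_iff.mpr hne
      have hs : (0 : ℂ) ≤ star (A *ᵥ v) ⬝ᵥ (A *ᵥ v) := dotProduct_star_self_nonneg _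
      have heq : star v ⬝ᵥ v = (star z * z) * (star (A *ᵥ v) ⬝ᵥ (A *ᵥ v)) := by
        conv_lhs => rw [hv']
        rw [star_smul, smul_dotProduct, dotProduct_smul]
        simp [smul_smul, mul_assoc, mul_comm, mul_left_comm]
      have hzz : star z * z = ((‖z‖ ^ 2 : ℝ) : ℂ) := by
        rw [Complex.star_def, mul_comm, Complex.mul_conj]
        norm_cast
        simp [Complex.sq_norm]
      rw [hzz] at heq
      have hle : star v ⬝ᵥ v ≤ ((‖z‖ ^ 2 : ℝ) : ℂ) * (star v ⬝ᵥ v) := by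
        rw [heq]
        exact mul_le_mul_of_nonneg_left (heq ▸ hA v)
          (by rw [Complex.zero_le_real]; positivity)
      have hlt : ((‖z‖ ^ 2 : ℝ) : ℂ) * (star v ⬝ᵥ v) < 1 * (star v ⬝ᵥ v) := by
        apply mul_lt_mul_of_pos_right _ ht
        rw [show (1 : ℂ) = ((1 : ℝ) : ℂ) by norm_num, Complex.real_lt_real]
        exact hz2
      rw [one_mul] at hlt
      exact absurd (lt_of_le_of_lt hle hlt) (lt_irrefl _)
    intro v w hvw
    have : (1 - z • A) *ᵥ (v - w) = 0 := by
      rw [mulVec_sub, hvw, sub_self]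
    have := hker _ this
    exact sub_eq_zero.mp this
  refine ⟨hunit, PosSemidef.of_dotProduct_mulVec_nonneg ?_ ?_⟩
  · -- Hermitian
    simp only [IsHermitian, conjTranspose_sub, conjTranspose_mul, conjTranspose_one,
      conjTranspose_conjTranspose]
  · -- positivity of the quadratic form
    intro x
    set E : Matrix (Fin n) (Fin n) ℂ := 1 - z • A with hE
    set F : Matrix (Fin n) (Fin n) ℂ := E⁻¹ with hF
    have hEF : E * F = 1 := mul_nonsing_inv E ((isUnit_iff_isUnit_det E).mp hunit)
    set Θ : Matrix (Fin m) (Fin m) ℂ := D + z • (C * F * B) with hΘ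
    set v : Fin n → ℂ := F *ᵥ (B *ᵥ x) with hv
    have hEv : E *ᵥ v = B *ᵥ x := by
      rw [hv, mulVec_mulVec, hEF, one_mulVec]
    have hstate : A *ᵥ (z • v) + B *ᵥ x = v := by
      have : v - z • (A *ᵥ v) = B *ᵥ x := by
        rw [← hEv, hE, sub_mulVec, one_mulVec, smul_mulVec]
      rw [mulVec_smul, ← this]
      abel
    have hout : C *ᵥ (z • v) + D *ᵥ x = Θ *ᵥ x := by
      rw [hΘ, add_mulVec, smul_mulVec, ← mulVec_mulVec, ← mulVec_mulVec, ← hv,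
        mulVec_smul]
      abel
    have h := hq (z • v) x
    rw [hstate, hout] at h
    have hvz : star (z • v) ⬝ᵥ (z • v) = (star z * z) * (star v ⬝ᵥ v) := by
      rw [star_smul, smul_dotProduct, dotProduct_smul]
      simp [smul_smul, mul_comm, mul_assoc, mul_left_comm]
    rw [hvz] at h
    -- h : star v ⬝ᵥ v + star (Θ *ᵥ x) ⬝ᵥ (Θ *ᵥ x) = (star z * z) * (star v ⬝ᵥ v) + star x ⬝ᵥ x
    have hgoal : star x ⬝ᵥ ((1 - Θᴴ * Θ) *ᵥ x)
        = (1 - star z * z) * (star v ⬝ᵥ v) := by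
      have hΘx : star x ⬝ᵥ ((Θᴴ * Θ) *ᵥ x) = star (Θ *ᵥ x) ⬝ᵥ (Θ *ᵥ x) := by
        rw [star_mulVec, dotProduct_mulVec, dotProduct_mulVec, vecMul_vecMul]
      rw [sub_mulVec, one_mulVec, dotProduct_sub, hΘx]
      linear_combination -h
    rw [hgoal]
    apply mul_nonneg
    · have hzz : star z * z = ((‖z‖ ^ 2 : ℝ) : ℂ) := by
        rw [Complex.star_def, mul_comm, Complex.mul_conj]
        norm_cast
        simp [Complex.sq_norm]
      rw [hzz, show (1 : ℂ) = ((1 : ℝ) : ℂ) by norm_num, ← Complex.ofReal_sub,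
        Complex.zero_le_real]
      linarith
    · exact dotProduct_star_self_nonneg _
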